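/- For all compatible positive complex structures j_a, j_b, j_c, j_d on (E, ω), the cocycle relation ζ(j_b,j_c,j_d) · ζ(j_a,j_c,j_d)^{−1} · ζ(j_a,j_b,j_d) · ζ(j_a,j_b,j_c)^{−1} = 1 holds (all four scalars being nonzero). -/

import Mathlib

open Complex

noncomputable section

variable {E : Type*} [AddCommGroup E] [Module ℝ E]

/-- `j` is a complex structure on `E`: `j ∘ j = -id`. -/
def IsCplxStruct (j : E →ₗ[ℝ] E) : Prop := ∀ x : E, j (j x) = -x

/-- `j` is compatible with the symplectic form `ω`. -/
def OmCompat (ω : E [⋀^Fin 2]→ₗ[ℝ] ℝ) (j : E →ₗ[ℝ] E) : Prop :=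
  ∀ x y : E, ω ![j x, j y] = ω ![x, y]

/-- `j` is positive with respect to `ω`. -/
def OmPos (ω : E [⋀^Fin 2]→ₗ[ℝ] ℝ) (j : E →ₗ[ℝ] E) : Prop :=
  ∀ x : E, x ≠ 0 → 0 < ω ![x, j x]

/-- `ω` is nondegenerate. -/
def OmNondeg (ω : E [⋀^Fin 2]→ₗ[ℝ] ℝ) : Prop :=
  ∀ x : E, (∀ y : E, ω ![x, y] = 0) → x = 0

/-- The complex conjugate of a `ℂ`-valued alternating form. -/
def conjAlt {p : ℕ} (α : E [⋀^Fin p]→ₗ[ℝ] ℂ) : E [⋀^Fin p]→ₗ[ℝ] ℂ :=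
  Complex.conjAe.toLinearMap.compAlternatingMap α

/-- Wedge product of `ℂ`-valued alternating forms. -/
def wedgeC {p q : ℕ} (α : E [⋀^Fin p]→ₗ[ℝ] ℂ) (β : E [⋀^Fin q]→ₗ[ℝ] ℂ) :
    E [⋀^Fin (p + q)]→ₗ[ℝ] ℂ :=
  ((LinearMap.mul' ℝ ℂ).compAlternatingMap (α.domCoprod β)).domDomCongr finSumFinEquiv

/-- The complexification of a real-valued alternating form. -/
def cplxForm {p : ℕ} (ω : E [⋀^Fin p]→ₗ[ℝ] ℝ) : E [⋀^Fin p]→ₗ[ℝ] ℂ :=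
  (Algebra.linearMap ℝ ℂ).compAlternatingMap ω

/-- `ω^{∧ m}`. -/
def omPow (ω : E [⋀^Fin 2]→ₗ[ℝ] ℝ) : (m : ℕ) → E [⋀^Fin (2 * m)]→ₗ[ℝ] ℂ
  | 0 => (AlternatingMap.constOfIsEmpty ℝ E (Fin 0) 1).domDomCongr (finCongr (by ring))
  | (m + 1) => (wedgeC (cplxForm ω) (omPow ω m)).domDomCongr (finCongr (by ring))

/-- `ω^{∧ n}`, reindexed by `Fin (n + n)`. -/
def topPow (ω : E [⋀^Fin 2]→ₗ[ℝ] ℝ) (n : ℕ) : E [⋀^Fin (n + n)]→ₗ[ℝ] ℂ :=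
  (omPow ω n).domDomCongr (finCongr (by ring))

/-- `Λ^{n,0}_j E*`: the space of `ℂ`-valued alternating `p`-forms `α` with
`α (j v₁, v₂, …, v_p) = i • α (v₁, …, v_p)`. -/
def Lam (j : E →ₗ[ℝ] E) (p : ℕ) : Submodule ℂ (E [⋀^Fin p]→ₗ[ℝ] ℂ) where
  carrier := {α | ∀ (v : Fin p → E) (i : Fin p), (i : ℕ) = 0 →
    α (Function.update v i (j (v i))) = Complex.I * α v}
  add_mem' := by
    intro a b ha hb v i hi
    simp only [AlternatingMap.add_apply, ha v i hi, hb v i hi]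
    ring
  zero_mem' := by
    intro v i hi
    simp
  smul_mem' := by
    intro c a ha v i hi
    simp only [AlternatingMap.smul_apply, ha v i hi, smul_eq_mul]
    ring

/-- The scalar `α ∧ β̄ / ω^{∧ n}`. -/
def pairing (ω : E [⋀^Fin 2]→ₗ[ℝ] ℝ) (n : ℕ) (α β : E [⋀^Fin n]→ₗ[ℝ] ℂ) : ℂ :=
  letI := Classical.propDecidable (∃ c : ℂ, wedgeC α (conjAlt β) = c • topPow ω n)
  if h : ∃ c : ℂ, wedgeC α (conjAlt β) = c • topPow ω n then h.choose else 0

/-- The defining property of `Ψ_{j_a,j_b}`. -/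
def PsiProp (ω : E [⋀^Fin 2]→ₗ[ℝ] ℝ) (n : ℕ) (ja jb : E →ₗ[ℝ] E)
    (Ψ : Lam ja n →ₗ[ℂ] Lam jb n) : Prop :=
  ∀ α β : Lam ja n,
    wedgeC ((Ψ α : E [⋀^Fin n]→ₗ[ℝ] ℂ)) (conjAlt (β : E [⋀^Fin n]→ₗ[ℝ] ℂ)) =
      wedgeC (α : E [⋀^Fin n]→ₗ[ℝ] ℂ) (conjAlt (β : E [⋀^Fin n]→ₗ[ℝ] ℂ))


section Aux

open Equiv

private lemma conjAlt_apply {p : ℕ} (α : E [⋀^Fin p]→ₗ[ℝ] ℂ) (v : Fin p → E) :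
    conjAlt α v = (starRingEnd ℂ) (α v) := rfl

private lemma wedge_apply {p q : ℕ} (α : E [⋀^Fin p]→ₗ[ℝ] ℂ) (β : E [⋀^Fin q]→ₗ[ℝ] ℂ)
    (w : Fin (p + q) → E) :
    ((p.factorial * q.factorial : ℕ) : ℂ) * wedgeC α β w =
      ∑ σ : Equiv.Perm (Fin p ⊕ Fin q), ((Equiv.Perm.sign σ : ℤ) : ℂ) *
        (α (fun i => w (finSumFinEquiv (σ (Sum.inl i)))) *
         β (fun i => w (finSumFinEquiv (σ (Sum.inr i))))) := by
  classical
  have h := MultilinearMap.domCoprod_alternization_eq α β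
  have h2 := DFunLike.congr_fun h (fun x => w (finSumFinEquiv x))
  simp only [Fintype.card_fin] at h2
  have hwedge : wedgeC α β w =
      LinearMap.mul' ℝ ℂ ((α.domCoprod β) (fun x => w (finSumFinEquiv x))) := rfl
  rw [hwedge, ← nsmul_eq_mul, ← map_nsmul, ← AlternatingMap.smul_apply, ← h2,
    MultilinearMap.alternatization_apply, map_sum]
  refine Finset.sum_congr rfl fun σ _ => ?_
  rw [MultilinearMap.domDomCongr_apply, Units.smul_def, map_zsmul, zsmul_eq_mul]
  congr 1


private lemma factC_ne {p q : ℕ} : ((p.factorial * q.factorial : ℕ) : ℂ) ≠ 0 := by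
  exact_mod_cast Nat.mul_ne_zero p.factorial_ne_zero q.factorial_ne_zero

private lemma wedge_zero_left {p q : ℕ} (β : E [⋀^Fin q]→ₗ[ℝ] ℂ) (w : Fin (p + q) → E) :
    wedgeC (0 : E [⋀^Fin p]→ₗ[ℝ] ℂ) β w = 0 := by
  have h := wedge_apply (0 : E [⋀^Fin p]→ₗ[ℝ] ℂ) β w
  simp only [AlternatingMap.zero_apply, zero_mul, mul_zero, Finset.sum_const_zero] at h
  exact (mul_eq_zero.mp h).resolve_left factC_ne

private lemma wedge_smul_smul {p q : ℕ} (α : E [⋀^Fin p]→ₗ[ℝ] ℂ) (β : E [⋀^Fin q]→ₗ[ℝ] ℂ)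
    (c d : ℂ) (w : Fin (p + q) → E) :
    wedgeC (c • α) (d • β) w = (c * d) * wedgeC α β w := by
  apply mul_left_cancel₀ (factC_ne (p := p) (q := q))
  rw [wedge_apply, show ((p.factorial * q.factorial : ℕ) : ℂ) * ((c * d) * wedgeC α β w)
      = (c * d) * (((p.factorial * q.factorial : ℕ) : ℂ) * wedgeC α β w) by ring,
    wedge_apply, Finset.mul_sum]
  refine Finset.sum_congr rfl fun σ _ => ?_
  simp only [AlternatingMap.smul_apply, smul_eq_mul]
  ring

private lemma conjAlt_smul {p : ℕ} (c : ℂ) (β : E [⋀^Fin p]→ₗ[ℝ] ℂ) :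
    conjAlt (c • β) = (starRingEnd ℂ) c • conjAlt β := by
  ext v
  simp only [conjAlt_apply, AlternatingMap.smul_apply, smul_eq_mul, map_mul]

private def sgnC {ι : Type*} [DecidableEq ι] [Fintype ι] (σ : Equiv.Perm ι) : ℂ :=
  ((Equiv.Perm.sign σ : ℤ) : ℂ)

private lemma sgnC_mul {ι : Type*} [DecidableEq ι] [Fintype ι] (σ τ : Equiv.Perm ι) :
    sgnC (σ * τ) = sgnC σ * sgnC τ := by
  simp only [sgnC, Equiv.Perm.sign_mul]; push_cast; ring

private lemma sgnC_sq {ι : Type*} [DecidableEq ι] [Fintype ι] (σ : Equiv.Perm ι) :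
    sgnC σ * sgnC σ = 1 := by
  rcases Int.units_eq_one_or (Equiv.Perm.sign σ) with h | h <;> simp [sgnC, h]

private lemma sgnC_inv {ι : Type*} [DecidableEq ι] [Fintype ι] (σ : Equiv.Perm ι) :
    sgnC σ⁻¹ = sgnC σ := by
  simp [sgnC]

private lemma sgnC_sumCongr {ιa ιb : Type*} [DecidableEq ιa] [Fintype ιa]
    [DecidableEq ιb] [Fintype ιb] (π : Equiv.Perm ιa) (ρ : Equiv.Perm ιb) :
    sgnC (Equiv.Perm.sumCongr π ρ) = sgnC π * sgnC ρ := by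
  simp only [sgnC, Equiv.Perm.sign_sumCongr]; push_cast; ring


private def jmodule (j : E →ₗ[ℝ] E) (hj : IsCplxStruct j) : Module ℂ E where
  smul z x := z.re • x + z.im • j x
  one_smul x := by show (1:ℂ).re • x + (1:ℂ).im • j x = x; simp
  mul_smul z w x := by
    show (z * w).re • x + (z * w).im • j x
      = z.re • (w.re • x + w.im • j x) + z.im • j (w.re • x + w.im • j x)
    simp only [Complex.mul_re, Complex.mul_im, map_add, map_smul, hj x, sub_smul, add_smul,
      smul_add, smul_smul, smul_neg]
    abel
  smul_zero z := by show z.re • (0:E) + z.im • j 0 = 0; simp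
  smul_add z x y := by
    show z.re • (x + y) + z.im • j (x + y) = (z.re • x + z.im • j x) + (z.re • y + z.im • j y)
    simp only [map_add, smul_add]
    abel
  add_smul z w x := by
    show (z + w).re • x + (z + w).im • j x = (z.re • x + z.im • j x) + (w.re • x + w.im • j x)
    simp only [Complex.add_re, Complex.add_im, add_smul]
    abel
  zero_smul x := by show (0:ℂ).re • x + (0:ℂ).im • j x = 0; simp

theorem crux {E : Type*} [AddCommGroup E] [Module ℝ E] [FiniteDimensional ℝ E]
    (n : ℕ) (hn : 0 < n) (hdim : Module.finrank ℝ E = 2 * n)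
    (j : E →ₗ[ℝ] E) (hj : IsCplxStruct j) :
    ∃ (α : E [⋀^Fin n]→ₗ[ℝ] ℂ) (w : Fin (n + n) → E),
      α ∈ Lam j n ∧ (∀ β ∈ Lam j n, ∃ c : ℂ, β = c • α) ∧
      wedgeC α (conjAlt α) w ≠ 0 := by
  classical
  letI : Module ℂ E := jmodule j hj
  have hsmul : ∀ (z : ℂ) (x : E), z • x = z.re • x + z.im • j x := fun z x => rfl
  have hIsmul : ∀ x : E, Complex.I • x = j x := by
    intro x; rw [hsmul]; simp
  haveI : IsScalarTower ℝ ℂ E := by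
    constructor
    intro r z x
    rw [hsmul, hsmul]
    simp only [Complex.real_smul, Complex.mul_re, Complex.mul_im, Complex.ofReal_re,
      Complex.ofReal_im, zero_mul, sub_zero, zero_add, add_zero, smul_add, smul_smul]
  haveI : Module.Finite ℂ E := Module.Finite.of_restrictScalars_finite ℝ ℂ E
  have hrank : Module.finrank ℂ E = n := by
    have h := Module.finrank_mul_finrank ℝ ℂ E
    rw [Complex.finrank_real_complex, hdim] at h
    omega
  let e : Module.Basis (Fin n) ℂ E := Module.finBasisOfFinrankEq ℂ E hrank
  let α : E [⋀^Fin n]→ₗ[ℝ] ℂ :=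
    { toMultilinearMap := e.det.toMultilinearMap.restrictScalars ℝ
      map_eq_zero_of_eq' := fun v i k h hik => e.det.map_eq_zero_of_eq v h hik }
  have hα_apply : ∀ v : Fin n → E, α v = e.det v := fun v => rfl
  have hmem : α ∈ Lam j n := by
    intro v i _
    have h1 : j (v i) = Complex.I • v i := (hIsmul (v i)).symm
    calc α (Function.update v i (j (v i)))
        = e.det (Function.update v i (Complex.I • v i)) := by rw [hα_apply, h1]
      _ = Complex.I • e.det (Function.update v i (v i)) := by
          rw [AlternatingMap.map_update_smul]
      _ = Complex.I * α v := by rw [Function.update_eq_self, smul_eq_mul, hα_apply]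
  -- every β in Lam j n satisfies the I-relation in every slot
  have hall : ∀ β : E [⋀^Fin n]→ₗ[ℝ] ℂ, β ∈ Lam j n → ∀ (v : Fin n → E) (k : Fin n),
      β (Function.update v k (j (v k))) = Complex.I * β v := by
    intro β hβ v k
    set i0 : Fin n := ⟨0, hn⟩ with hi0
    set τ : Equiv.Perm (Fin n) := Equiv.swap i0 k with hτ
    have h1 := hβ (v ∘ τ) i0 rfl
    have hvτ : (v ∘ τ) i0 = v k := by
      simp [hτ, Equiv.swap_apply_left]
    rw [hvτ] at h1
    have hupd : Function.update (v ∘ τ) i0 (j (v k)) = (Function.update v k (j (v k))) ∘ τ := by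
      have h2 := Function.update_comp_equiv v τ k (j (v k))
      rw [h2]
      congr 1
      simp [hτ, Equiv.symm_apply_eq, Equiv.swap_apply_left]
    rw [hupd, AlternatingMap.map_perm, AlternatingMap.map_perm] at h1
    rcases Int.units_eq_one_or (Equiv.Perm.sign τ) with hs | hs <;>
      rw [hs] at h1 <;> simp only [one_smul, Units.smul_def, Units.val_neg, Units.val_one,
        neg_smul, one_smul, neg_zsmul, one_zsmul, smul_eq_mul, Int.cast_one, Int.cast_neg,
        neg_one_mul, mul_neg, neg_inj, neg_eq_iff_eq_neg] at h1
    · exact h1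
    · simpa using h1
  have hspan : ∀ β ∈ Lam j n, ∃ c : ℂ, β = c • α := by
    intro β hβ
    have hjslot : ∀ (inst : DecidableEq (Fin n)) (v : Fin n → E) (i : Fin n) (x : E),
        β (@Function.update _ _ inst v i (j x)) = Complex.I * β (@Function.update _ _ inst v i x) := by
      intro inst v i x
      have hEq : inst = instDecidableEqFin n := Subsingleton.elim _ _
      subst hEq
      have h := hall β hβ (Function.update v i x) i
      simpa [Function.update_idem] using h
    let βm : MultilinearMap ℂ (fun _ : Fin n => E) ℂ :=
      { toFun := β
        map_update_add' := fun v i x y => β.map_update_add v i x y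
        map_update_smul' := fun v i z x => by
          have hzx : z • x = z.re • x + z.im • j x := rfl
          rw [hzx, β.map_update_add, β.map_update_smul, β.map_update_smul, hjslot _]
          simp only [smul_eq_mul, Complex.real_smul, smul_eq_mul]
          linear_combination β (Function.update v i x) * Complex.re_add_im z }
    let βa : E [⋀^Fin n]→ₗ[ℂ] ℂ :=
      { toMultilinearMap := βm
        map_eq_zero_of_eq' := fun v i k h hik => β.map_eq_zero_of_eq v h hik }
    have h3 : βa = βa e • e.det := AlternatingMap.eq_smul_basis_det e βa
    refine ⟨βa ⇑e, ?_⟩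
    ext v
    have h4 := DFunLike.congr_fun h3 v
    simpa [βa, βm, hα_apply] using h4
  -- the evaluation point
  let v0 : Fin n ⊕ Fin n → E := Sum.elim (fun k => e k) (fun k => j (e k))
  let w : Fin (n + n) → E := fun x => v0 (finSumFinEquiv.symm x)
  let M : Fin n → (Fin n ⊕ Fin n) → ℂ := fun i x => e.repr (v0 x) i
  let Q : Matrix (Fin n ⊕ Fin n) (Fin n ⊕ Fin n) ℂ :=
    Matrix.of (fun x y => Sum.elim (fun i => M i y) (fun i => (starRingEnd ℂ) (M i y)) x)
  have h1repr : ∀ k i : Fin n, e.repr (e k) i = (1 : Matrix (Fin n) (Fin n) ℂ) i k := by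
    intro k i
    rw [e.repr_self, Matrix.one_apply]
    simp [Finsupp.single_apply, eq_comm]
  have h2repr : ∀ k i : Fin n, e.repr (j (e k)) i
      = Complex.I * (1 : Matrix (Fin n) (Fin n) ℂ) i k := by
    intro k i
    rw [← hIsmul (e k), map_smul, Finsupp.smul_apply, smul_eq_mul, h1repr]
  have hQblock : Q = Matrix.fromBlocks 1 (Complex.I • 1) 1 ((-Complex.I) • 1) := by
    ext x y
    cases x with
    | inl i => cases y with
      | inl k => simp [Q, M, v0, Matrix.one_apply, Finsupp.single_apply, eq_comm]
      | inr k => simp [Q, M, v0, h2repr, Matrix.one_apply, Finsupp.single_apply, eq_comm]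
    | inr i => cases y with
      | inl k => simp [Q, M, v0, Matrix.one_apply, Finsupp.single_apply, eq_comm, apply_ite]
      | inr k => simp [Q, M, v0, h2repr, Matrix.one_apply, Finsupp.single_apply, eq_comm, apply_ite, Complex.conj_I]
  have hQdet : Q.det = (-2 * Complex.I) ^ n := by
    rw [hQblock, Matrix.det_fromBlocks_one₁₁]
    have hmat : (-Complex.I) • (1 : Matrix (Fin n) (Fin n) ℂ) - 1 * (Complex.I • 1)
        = (-2 * Complex.I) • 1 := by
      rw [Matrix.one_mul, ← sub_smul]
      congr 1
      ring
    rw [hmat, Matrix.det_smul, Matrix.det_one, Fintype.card_fin, mul_one]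
  have hdet0 : ∀ (u : Fin n → E), α u
      = ∑ π : Equiv.Perm (Fin n), sgnC π * ∏ r, e.repr (u r) (π r) := by
    intro u
    rw [hα_apply, Module.Basis.det_apply, Matrix.det_apply]
    refine Finset.sum_congr rfl fun π _ => ?_
    rw [Units.smul_def, zsmul_eq_mul]
    rfl
  have hwfin : ∀ x : Fin n ⊕ Fin n, w (finSumFinEquiv x) = v0 x := by
    intro x; simp [w]
  have hdetA : ∀ σ : Equiv.Perm (Fin n ⊕ Fin n),
      α (fun i => w (finSumFinEquiv (σ (Sum.inl i))))
        = ∑ π : Equiv.Perm (Fin n), sgnC π * ∏ r, Q (Sum.inl (π r)) (σ (Sum.inl r)) := by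
    intro σ
    rw [hdet0]
    refine Finset.sum_congr rfl fun π _ => ?_
    congr 1
    exact Finset.prod_congr rfl fun r _ => by rw [hwfin]; rfl
  have hdetB : ∀ σ : Equiv.Perm (Fin n ⊕ Fin n),
      conjAlt α (fun i => w (finSumFinEquiv (σ (Sum.inr i))))
        = ∑ ρ : Equiv.Perm (Fin n), sgnC ρ * ∏ r, Q (Sum.inr (ρ r)) (σ (Sum.inr r)) := by
    intro σ
    rw [conjAlt_apply, hdet0, map_sum]
    refine Finset.sum_congr rfl fun ρ _ => ?_
    rw [map_mul, map_prod]
    congr 1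
    · simp [sgnC]
    · exact Finset.prod_congr rfl fun r _ => by rw [hwfin]; rfl
  have inner : ∀ (π ρ : Equiv.Perm (Fin n)),
      (∑ σ : Equiv.Perm (Fin n ⊕ Fin n), (sgnC σ * sgnC π * sgnC ρ) *
        ((∏ r, Q (Sum.inl (π r)) (σ (Sum.inl r))) * (∏ r, Q (Sum.inr (ρ r)) (σ (Sum.inr r)))))
      = (-2 * Complex.I) ^ n := by
    intro π ρ
    have hstep : (∑ σ : Equiv.Perm (Fin n ⊕ Fin n), (sgnC σ * sgnC π * sgnC ρ) *
        ((∏ r, Q (Sum.inl (π r)) (σ (Sum.inl r))) * (∏ r, Q (Sum.inr (ρ r)) (σ (Sum.inr r)))))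
        = ∑ σ : Equiv.Perm (Fin n ⊕ Fin n), sgnC σ * ∏ x, Q x (σ x) := by
      rw [← Equiv.sum_comp (Equiv.mulRight (Equiv.Perm.sumCongr π⁻¹ ρ⁻¹))
        (fun σ : Equiv.Perm (Fin n ⊕ Fin n) => sgnC σ * ∏ x, Q x (σ x))]
      refine Finset.sum_congr rfl fun σ _ => ?_
      have e1 : ∀ r : Fin n,
          ((Equiv.mulRight (Equiv.Perm.sumCongr π⁻¹ ρ⁻¹)) σ) (Sum.inl r)
            = σ (Sum.inl (π⁻¹ r)) := by
        intro r; simp [Equiv.Perm.mul_apply]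
      have e2 : ∀ r : Fin n,
          ((Equiv.mulRight (Equiv.Perm.sumCongr π⁻¹ ρ⁻¹)) σ) (Sum.inr r)
            = σ (Sum.inr (ρ⁻¹ r)) := by
        intro r; simp [Equiv.Perm.mul_apply]
      have hsg : sgnC ((Equiv.mulRight (Equiv.Perm.sumCongr π⁻¹ ρ⁻¹)) σ)
          = sgnC σ * (sgnC π * sgnC ρ) := by
        show sgnC (σ * Equiv.Perm.sumCongr π⁻¹ ρ⁻¹) = _
        rw [sgnC_mul, sgnC_sumCongr, sgnC_inv, sgnC_inv]
      rw [hsg, Fintype.prod_sum_type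
        (fun x => Q x (((Equiv.mulRight (Equiv.Perm.sumCongr π⁻¹ ρ⁻¹)) σ) x))]
      simp only [e1, e2]
      rw [← Equiv.prod_comp π (fun a => Q (Sum.inl a) (σ (Sum.inl (π⁻¹ a)))),
        ← Equiv.prod_comp ρ (fun a => Q (Sum.inr a) (σ (Sum.inr (ρ⁻¹ a))))]
      simp only [Equiv.Perm.inv_def, Equiv.symm_apply_apply]
      ring
    rw [hstep, ← hQdet, ← Matrix.det_transpose Q, Matrix.det_apply]
    refine Finset.sum_congr rfl fun σ _ => ?_
    rw [Units.smul_def, zsmul_eq_mul]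
    rfl
  have key : ((n.factorial * n.factorial : ℕ) : ℂ) * wedgeC α (conjAlt α) w
      = ((Fintype.card (Equiv.Perm (Fin n)) : ℂ)
          * (Fintype.card (Equiv.Perm (Fin n)) : ℂ)) * (-2 * Complex.I) ^ n := by
    rw [wedge_apply]
    calc (∑ σ : Equiv.Perm (Fin n ⊕ Fin n), ((Equiv.Perm.sign σ : ℤ) : ℂ) *
          (α (fun i => w (finSumFinEquiv (σ (Sum.inl i))))
            * conjAlt α (fun i => w (finSumFinEquiv (σ (Sum.inr i))))))
        = ∑ σ : Equiv.Perm (Fin n ⊕ Fin n), ∑ π : Equiv.Perm (Fin n), ∑ ρ : Equiv.Perm (Fin n),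
            (sgnC σ * sgnC π * sgnC ρ) *
            ((∏ r, Q (Sum.inl (π r)) (σ (Sum.inl r)))
              * (∏ r, Q (Sum.inr (ρ r)) (σ (Sum.inr r)))) := by
          refine Finset.sum_congr rfl fun σ _ => ?_
          show sgnC σ * (α (fun i => w (finSumFinEquiv (σ (Sum.inl i))))
            * conjAlt α (fun i => w (finSumFinEquiv (σ (Sum.inr i))))) = _
          rw [hdetA σ, hdetB σ, Fintype.sum_mul_sum, Finset.mul_sum]
          refine Finset.sum_congr rfl fun π _ => ?_
          rw [Finset.mul_sum]
          exact Finset.sum_congr rfl fun ρ _ => by ring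
      _ = ∑ π : Equiv.Perm (Fin n), ∑ ρ : Equiv.Perm (Fin n),
            ∑ σ : Equiv.Perm (Fin n ⊕ Fin n),
            (sgnC σ * sgnC π * sgnC ρ) *
            ((∏ r, Q (Sum.inl (π r)) (σ (Sum.inl r)))
              * (∏ r, Q (Sum.inr (ρ r)) (σ (Sum.inr r)))) := by
          rw [Finset.sum_comm]
          exact Finset.sum_congr rfl fun π _ => Finset.sum_comm
      _ = ∑ _π : Equiv.Perm (Fin n), ∑ _ρ : Equiv.Perm (Fin n), (-2 * Complex.I) ^ n :=
          Finset.sum_congr rfl fun π _ => Finset.sum_congr rfl fun ρ _ => inner π ρ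
      _ = ((Fintype.card (Equiv.Perm (Fin n)) : ℂ)
            * (Fintype.card (Equiv.Perm (Fin n)) : ℂ)) * (-2 * Complex.I) ^ n := by
          simp only [Finset.sum_const, Finset.card_univ, nsmul_eq_mul]
          ring
  have hwedge_ne : wedgeC α (conjAlt α) w ≠ 0 := by
    intro h0
    rw [h0, mul_zero] at key
    have hne : ((Fintype.card (Equiv.Perm (Fin n)) : ℂ)
        * (Fintype.card (Equiv.Perm (Fin n)) : ℂ)) * (-2 * Complex.I) ^ n ≠ 0 := by
      apply mul_ne_zero
      · exact mul_ne_zero (Nat.cast_ne_zero.mpr Fintype.card_ne_zero)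
          (Nat.cast_ne_zero.mpr Fintype.card_ne_zero)
      · exact pow_ne_zero _ (by simp [Complex.I_ne_zero])
    exact hne key.symm
  exact ⟨α, w, hmem, hspan, hwedge_ne⟩

end Aux

private lemma pair_ne_of_ne {E : Type*} [AddCommGroup E] [Module ℝ E]
    (n : ℕ) (jj : E →ₗ[ℝ] E) (αj : E [⋀^Fin n]→ₗ[ℝ] ℂ) (wj : Fin (n + n) → E)
    (hspan : ∀ β ∈ Lam jj n, ∃ c : ℂ, β = c • αj)
    (hw : wedgeC αj (conjAlt αj) wj ≠ 0)
    (γ : Lam jj n) (hγ : γ ≠ 0) :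
    wedgeC (γ : E [⋀^Fin n]→ₗ[ℝ] ℂ) (conjAlt (γ : E [⋀^Fin n]→ₗ[ℝ] ℂ)) wj ≠ 0 := by
  obtain ⟨c, hc⟩ := hspan (γ : E [⋀^Fin n]→ₗ[ℝ] ℂ) γ.2
  have hcne : c ≠ 0 := by
    rintro rfl
    exact hγ (Subtype.ext (by simpa using hc))
  have hcconj : (starRingEnd ℂ) c ≠ 0 :=
    fun h => hcne (by simpa using congrArg (starRingEnd ℂ) h)
  rw [hc, conjAlt_smul, wedge_smul_smul]
  exact mul_ne_zero (mul_ne_zero hcne hcconj) hw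

private lemma psi_ne {E : Type*} [AddCommGroup E] [Module ℝ E]
    (n : ℕ) (ω : E [⋀^Fin 2]→ₗ[ℝ] ℝ) (j1 j2 : E →ₗ[ℝ] E)
    (Ψ : Lam j1 n →ₗ[ℂ] Lam j2 n) (hΨ : PsiProp ω n j1 j2 Ψ)
    (w1 : Fin (n + n) → E) (γ : Lam j1 n)
    (hγ : wedgeC (γ : E [⋀^Fin n]→ₗ[ℝ] ℂ) (conjAlt (γ : E [⋀^Fin n]→ₗ[ℝ] ℂ)) w1 ≠ 0) :
    Ψ γ ≠ 0 := by
  intro h0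
  have h1 := DFunLike.congr_fun (hΨ γ γ) w1
  rw [h0, ZeroMemClass.coe_zero, wedge_zero_left] at h1
  exact hγ h1.symm
/-- the cocycle relation
`ζ(j_b,j_c,j_d) · ζ(j_a,j_c,j_d)⁻¹ · ζ(j_a,j_b,j_d) · ζ(j_a,j_b,j_c)⁻¹ = 1`,
all four scalars being nonzero. -/
theorem statement4 {E : Type*} [AddCommGroup E] [Module ℝ E] [FiniteDimensional ℝ E]
    (n : ℕ) (hn : 0 < n) (ω : E [⋀^Fin 2]→ₗ[ℝ] ℝ)
    (hdim : Module.finrank ℝ E = 2 * n) (hnd : OmNondeg ω)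
    (ja jb jc jd : E →ₗ[ℝ] E)
    (hja : IsCplxStruct ja) (hjb : IsCplxStruct jb)
    (hjc : IsCplxStruct jc) (hjd : IsCplxStruct jd)
    (hca : OmCompat ω ja) (hcb : OmCompat ω jb)
    (hcc : OmCompat ω jc) (hcd : OmCompat ω jd)
    (hpa : OmPos ω ja) (hpb : OmPos ω jb) (hpc : OmPos ω jc) (hpd : OmPos ω jd)
    (Ψab : Lam ja n →ₗ[ℂ] Lam jb n) (hΨab : PsiProp ω n ja jb Ψab)
    (Ψac : Lam ja n →ₗ[ℂ] Lam jc n) (hΨac : PsiProp ω n ja jc Ψac)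
    (Ψad : Lam ja n →ₗ[ℂ] Lam jd n) (hΨad : PsiProp ω n ja jd Ψad)
    (Ψbc : Lam jb n →ₗ[ℂ] Lam jc n) (hΨbc : PsiProp ω n jb jc Ψbc)
    (Ψbd : Lam jb n →ₗ[ℂ] Lam jd n) (hΨbd : PsiProp ω n jb jd Ψbd)
    (Ψcd : Lam jc n →ₗ[ℂ] Lam jd n) (hΨcd : PsiProp ω n jc jd Ψcd)
    (z₁ z₂ z₃ z₄ : ℂ)
    (hz₁ : Ψbd = z₁ • (Ψcd ∘ₗ Ψbc))
    (hz₂ : Ψad = z₂ • (Ψcd ∘ₗ Ψac))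
    (hz₃ : Ψad = z₃ • (Ψbd ∘ₗ Ψab))
    (hz₄ : Ψac = z₄ • (Ψbc ∘ₗ Ψab)) :
    z₁ ≠ 0 ∧ z₂ ≠ 0 ∧ z₃ ≠ 0 ∧ z₄ ≠ 0 ∧ z₁ * z₂⁻¹ * z₃ * z₄⁻¹ = 1 := by
  classical
  obtain ⟨αa, wa, hmema, hspana, hwa⟩ := crux n hn hdim ja hja
  obtain ⟨αb, wb, hmemb, hspanb, hwb⟩ := crux n hn hdim jb hjb
  obtain ⟨αc, wc, hmemc, hspanc, hwc⟩ := crux n hn hdim jc hjc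
  obtain ⟨αd, wd, hmemd, hspand, hwd⟩ := crux n hn hdim jd hjd
  set A : Lam ja n := ⟨αa, hmema⟩ with hA
  have hApair : wedgeC (A : E [⋀^Fin n]→ₗ[ℝ] ℂ) (conjAlt (A : E [⋀^Fin n]→ₗ[ℝ] ℂ)) wa ≠ 0 := hwa
  have hBne : Ψab A ≠ 0 := psi_ne n ω ja jb Ψab hΨab wa A hApair
  have hBpair := pair_ne_of_ne n jb αb wb hspanb hwb (Ψab A) hBne
  have hCne : Ψbc (Ψab A) ≠ 0 := psi_ne n ω jb jc Ψbc hΨbc wb (Ψab A) hBpair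
  have hCpair := pair_ne_of_ne n jc αc wc hspanc hwc (Ψbc (Ψab A)) hCne
  have hDne : Ψcd (Ψbc (Ψab A)) ≠ 0 := psi_ne n ω jc jd Ψcd hΨcd wc (Ψbc (Ψab A)) hCpair
  have hΨbdBne : Ψbd (Ψab A) ≠ 0 := psi_ne n ω jb jd Ψbd hΨbd wb (Ψab A) hBpair
  have hΨadAne : Ψad A ≠ 0 := psi_ne n ω ja jd Ψad hΨad wa A hApair
  have hΨacAne : Ψac A ≠ 0 := psi_ne n ω ja jc Ψac hΨac wa A hApair
  have e1 : Ψbd (Ψab A) = z₁ • Ψcd (Ψbc (Ψab A)) := by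
    have := LinearMap.congr_fun hz₁ (Ψab A); simpa using this
  have e2 : Ψad A = z₂ • Ψcd (Ψac A) := by
    have := LinearMap.congr_fun hz₂ A; simpa using this
  have e3 : Ψad A = z₃ • Ψbd (Ψab A) := by
    have := LinearMap.congr_fun hz₃ A; simpa using this
  have e4 : Ψac A = z₄ • Ψbc (Ψab A) := by
    have := LinearMap.congr_fun hz₄ A; simpa using this
  have hz1 : z₁ ≠ 0 := by rintro rfl; rw [zero_smul] at e1; exact hΨbdBne e1
  have hz2 : z₂ ≠ 0 := by rintro rfl; rw [zero_smul] at e2; exact hΨadAne e2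
  have hz3 : z₃ ≠ 0 := by rintro rfl; rw [zero_smul] at e3; exact hΨadAne e3
  have hz4 : z₄ ≠ 0 := by rintro rfl; rw [zero_smul] at e4; exact hΨacAne e4
  have hmain : (z₃ * z₁) • Ψcd (Ψbc (Ψab A)) = (z₂ * z₄) • Ψcd (Ψbc (Ψab A)) := by
    calc (z₃ * z₁) • Ψcd (Ψbc (Ψab A)) = z₃ • (z₁ • Ψcd (Ψbc (Ψab A))) := mul_smul _ _ _
      _ = z₃ • Ψbd (Ψab A) := by rw [← e1]
      _ = Ψad A := e3.symm
      _ = z₂ • Ψcd (Ψac A) := e2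
      _ = z₂ • Ψcd (z₄ • Ψbc (Ψab A)) := by rw [← e4]
      _ = z₂ • (z₄ • Ψcd (Ψbc (Ψab A))) := by rw [map_smul]
      _ = (z₂ * z₄) • Ψcd (Ψbc (Ψab A)) := (mul_smul _ _ _).symm
  have hfne : (Ψcd (Ψbc (Ψab A)) : E [⋀^Fin n]→ₗ[ℝ] ℂ) ≠ 0 := by
    simpa using hDne
  have hpt : ∃ v : Fin n → E, (Ψcd (Ψbc (Ψab A)) : E [⋀^Fin n]→ₗ[ℝ] ℂ) v ≠ 0 := by
    by_contra h
    push_neg at h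
    exact hfne (AlternatingMap.ext fun v => by simpa using h v)
  obtain ⟨v, hv⟩ := hpt
  have hval := congrArg (fun γ : Lam jd n => (γ : E [⋀^Fin n]→ₗ[ℝ] ℂ) v) hmain
  simp only [SetLike.val_smul, AlternatingMap.smul_apply, smul_eq_mul] at hval
  have heq : z₃ * z₁ = z₂ * z₄ := mul_right_cancel₀ hv hval
  refine ⟨hz1, hz2, hz3, hz4, ?_⟩
  field_simp
  linear_combination heq

end
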